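/- Let $0 < s < 1$, $K \ge 1$, and $y \le x \le K y$ with $y > 0$. Then $(x+y)^s \le \left(\frac{K}{1+K}\right)^{1-s}(x^s + y^s)$. -/

import Mathlib

theorem stmt_3 (s K x y : ℝ) (hs0 : 0 < s) (hs1 : s < 1) (hK : 1 ≤ K)
    (hy : 0 < y) (hyx : y ≤ x) (hxK : x ≤ K * y) :
    (x + y) ^ s ≤ (K / (1 + K)) ^ (1 - s) * (x ^ s + y ^ s) := by
  have hx : 0 < x := lt_of_lt_of_le hy hyx
  have hK0 : 0 < K := lt_of_lt_of_le one_pos hK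
  have hKK : (0:ℝ) < (1 + K) / K := by positivity
  have h1s : (0:ℝ) ≤ 1 - s := by linarith
  have hxy : 0 < x + y := by linarith
  have hc : 0 < ((1 + K) / K) ^ (1 - s) := Real.rpow_pos_of_pos hKK _
  have hxpos : 0 < x ^ (1 - s) := Real.rpow_pos_of_pos hx _
  have hA : x * ((1 + K) / K) ≤ x + y := by
    rw [mul_div_assoc', div_le_iff₀ hK0]
    nlinarith
  have h2 : x ^ (1 - s) * ((1 + K) / K) ^ (1 - s) ≤ (x + y) ^ (1 - s) := by
    rw [← Real.mul_rpow hx.le hKK.le]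
    exact Real.rpow_le_rpow (by positivity) hA h1s
  have h3 : y ≤ y ^ s * x ^ (1 - s) := by
    calc y = y ^ s * y ^ (1 - s) := by
            rw [← Real.rpow_add hy]; norm_num
      _ ≤ y ^ s * x ^ (1 - s) := by gcongr
  have h5 : (x + y) ^ s * (x + y) ^ (1 - s) = x + y := by
    rw [← Real.rpow_add hxy]; norm_num
  have h6 : x ^ s * x ^ (1 - s) = x := by
    rw [← Real.rpow_add hx]; norm_num
  have h4 : (x + y) ^ s * (x ^ (1 - s) * ((1 + K) / K) ^ (1 - s)) ≤ x + y := by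
    calc (x + y) ^ s * (x ^ (1 - s) * ((1 + K) / K) ^ (1 - s))
        ≤ (x + y) ^ s * (x + y) ^ (1 - s) :=
          mul_le_mul_of_nonneg_left h2 (Real.rpow_pos_of_pos hxy s).le
      _ = x + y := h5
  have h7 : (x + y) ^ s * ((1 + K) / K) ^ (1 - s) ≤ x ^ s + y ^ s := by
    rw [← mul_le_mul_iff_of_pos_right hxpos]
    calc (x + y) ^ s * ((1 + K) / K) ^ (1 - s) * x ^ (1 - s)
        = (x + y) ^ s * (x ^ (1 - s) * ((1 + K) / K) ^ (1 - s)) := by ring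
      _ ≤ x + y := h4
      _ ≤ x ^ s * x ^ (1 - s) + y ^ s * x ^ (1 - s) := by rw [h6]; linarith
      _ = (x ^ s + y ^ s) * x ^ (1 - s) := by ring
  have hinv : (K / (1 + K)) ^ (1 - s) = (((1 + K) / K) ^ (1 - s))⁻¹ := by
    rw [show K / (1 + K) = ((1 + K) / K)⁻¹ by rw [inv_div], Real.inv_rpow hKK.le]
  rw [hinv]
  calc (x + y) ^ s
      = (((1 + K) / K) ^ (1 - s))⁻¹ * ((x + y) ^ s * ((1 + K) / K) ^ (1 - s)) := by
        field_simp
    _ ≤ (((1 + K) / K) ^ (1 - s))⁻¹ * (x ^ s + y ^ s) := by gcongr
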